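/- Every TzS-closed semigroup is zero-closed: if a semigroup X is TzS-closed, then for every Hausdorff topology on the 0-extension X⁰ = X ∪ {0} making X⁰ a topological semigroup, the set X is closed in X⁰. -/

import Mathlib

universe u

open Set TopologicalSpace

/-- A topological space is zero-dimensional: it has a base of clopen sets. -/
def HasClopenBasis (Y : Type*) [TopologicalSpace Y] : Prop :=
  ∃ B : Set (Set Y), (∀ s ∈ B, IsClopen s) ∧ IsTopologicalBasis B

section TopClasses

variable (X : Type u) [Semigroup X]

/-- `X` is absolutely `T₁S`-closed: the image of every homomorphism to a `T₁`
topological semigroup is closed. -/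
def AbsolutelyT1SClosed : Prop :=
  ∀ (Y : Type u) [Semigroup Y] [TopologicalSpace Y] [ContinuousMul Y] [T1Space Y]
    (h : X →ₙ* Y), IsClosed (Set.range h)

/-- `X` is absolutely `T₂S`-closed. -/
def AbsolutelyT2SClosed : Prop :=
  ∀ (Y : Type u) [Semigroup Y] [TopologicalSpace Y] [ContinuousMul Y] [T2Space Y]
    (h : X →ₙ* Y), IsClosed (Set.range h)

/-- `X` is absolutely `TzS`-closed. -/
def AbsolutelyTzSClosed : Prop :=
  ∀ (Y : Type u) [Semigroup Y] [TopologicalSpace Y] [ContinuousMul Y] [T1Space Y],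
    HasClopenBasis Y → ∀ (h : X →ₙ* Y), IsClosed (Set.range h)

/-- `X` is `T₁S`-closed: the image of every injective homomorphism to a `T₁`
topological semigroup with discrete image is closed. -/
def T1SClosed : Prop :=
  ∀ (Y : Type u) [Semigroup Y] [TopologicalSpace Y] [ContinuousMul Y] [T1Space Y]
    (h : X →ₙ* Y), Function.Injective h → DiscreteTopology (Set.range h) →
      IsClosed (Set.range h)

/-- `X` is `T₂S`-closed. -/
def T2SClosed : Prop :=
  ∀ (Y : Type u) [Semigroup Y] [TopologicalSpace Y] [ContinuousMul Y] [T2Space Y]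
    (h : X →ₙ* Y), Function.Injective h → DiscreteTopology (Set.range h) →
      IsClosed (Set.range h)

/-- `X` is `TzS`-closed. -/
def TzSClosed : Prop :=
  ∀ (Y : Type u) [Semigroup Y] [TopologicalSpace Y] [ContinuousMul Y] [T1Space Y],
    HasClopenBasis Y → ∀ (h : X →ₙ* Y), Function.Injective h →
      DiscreteTopology (Set.range h) → IsClosed (Set.range h)

/-- `X` is injectively `T₂S`-closed. -/
def InjectivelyT2SClosed : Prop :=
  ∀ (Y : Type u) [Semigroup Y] [TopologicalSpace Y] [ContinuousMul Y] [T2Space Y]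
    (h : X →ₙ* Y), Function.Injective h → IsClosed (Set.range h)

/-- `X` is projectively `T₁S`-closed: all congruence quotients are `T₁S`-closed. -/
def ProjectivelyT1SClosed : Prop := ∀ c : Con X, T1SClosed c.Quotient

/-- `X` is projectively `TzS`-closed. -/
def ProjectivelyTzSClosed : Prop := ∀ c : Con X, TzSClosed c.Quotient

/-- `X` is projectively `T₁S`-discrete: every homomorphism into a `T₁`
topological semigroup has discrete image. -/
def ProjectivelyT1SDiscrete : Prop :=
  ∀ (Y : Type u) [Semigroup Y] [TopologicalSpace Y] [ContinuousMul Y] [T1Space Y]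
    (h : X →ₙ* Y), DiscreteTopology (Set.range h)

/-- `X` is projectively `TzS`-discrete. -/
def ProjectivelyTzSDiscrete : Prop :=
  ∀ (Y : Type u) [Semigroup Y] [TopologicalSpace Y] [ContinuousMul Y] [T1Space Y],
    HasClopenBasis Y → ∀ (h : X →ₙ* Y), DiscreteTopology (Set.range h)

end TopClasses

/-- `spow x n` is the power `x^(n+1)` in a semigroup; thus as `n` ranges over `ℕ`,
`spow x n` ranges over all powers `x^m`, `m ≥ 1`. -/
def spow {X : Type*} [Semigroup X] (x : X) : ℕ → X
  | 0 => x
  | n + 1 => spow x n * x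

section AlgDefs

variable (X : Type*) [Semigroup X]

/-- the set `E(X)` of idempotents. -/
def idemSet : Set X := {x | x * x = x}

/-- `H_e`, the maximal subgroup containing the idempotent `e`. -/
def maxSubgroup (e : X) : Set X :=
  {x | x * e = x ∧ e * x = x ∧ ∃ y, y * e = y ∧ e * y = y ∧ x * y = e ∧ y * x = e}

/-- The Clifford part `H(X) = ⋃_{e ∈ E(X)} H_e`. -/
def cliffordPart : Set X := ⋃ e ∈ idemSet X, maxSubgroup X e

/-- `H_e/e := {x : xe = ex ∈ H_e}`. -/
def HeCoideal (e : X) : Set X := {x | x * e = e * x ∧ x * e ∈ maxSubgroup X e}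

/-- `I` is an ideal of the semigroup `X`. -/
def IsIdealSet (I : Set X) : Prop := ∀ x ∈ I, ∀ y : X, x * y ∈ I ∧ y * x ∈ I

/-- The set `VE(X)` of viable idempotents: `e` is idempotent and `X ∖ (H_e/e)` is an ideal. -/
def viableIdems : Set X := {e | e ∈ idemSet X ∧ IsIdealSet X (Set.univ \ HeCoideal X e)}

/-- The center `Z(X)`. -/
def centerSet : Set X := {z | ∀ x, z * x = x * z}

/-- `√A = {x : xⁿ ∈ A for some n ≥ 1}`. -/
def sqrtSet (A : Set X) : Set X := {x | ∃ n : ℕ, spow x n ∈ A}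

/-- A subset `B ⊆ X` is bounded: there is `n ≥ 1` with `xⁿ` idempotent for all `x ∈ B`. -/
def BoundedSet (B : Set X) : Prop := ∃ n : ℕ, ∀ x ∈ B, spow x n ∈ idemSet X

/-- The semigroup `X` is bounded. -/
def BoundedSemigroup : Prop := ∃ n : ℕ, ∀ x : X, spow x n ∈ idemSet X

/-- `X` is chain-finite. -/
def ChainFinite : Prop :=
  ∀ I : Set X, I.Infinite → ∃ x ∈ I, ∃ y ∈ I, x * y ≠ x ∧ x * y ≠ y

/-- `G ⊆ X` is a subgroup of the semigroup `X`. -/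
def IsSubgroupSet (G : Set X) : Prop :=
  (∀ x ∈ G, ∀ y ∈ G, x * y ∈ G) ∧
    ∃ e ∈ G, (∀ x ∈ G, x * e = x ∧ e * x = x) ∧ ∀ x ∈ G, ∃ y ∈ G, x * y = e ∧ y * x = e

/-- `X` is group-finite: all its subgroups are finite. -/
def GroupFinite : Prop := ∀ G : Set X, IsSubgroupSet X G → G.Finite

/-- `X` is Clifford+finite: `X ∖ H(X)` is finite. -/
def CliffordPlusFinite : Prop := (Set.univ \ cliffordPart X).Finite

/-- `X` is `E`-commutative: idempotents commute. -/
def ECommutative : Prop := ∀ x ∈ idemSet X, ∀ y ∈ idemSet X, x * y = y * x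

end AlgDefs

/-- The Rees congruence associated with an ideal `I` of `X`. -/
def ReesCon {X : Type*} [Semigroup X] (I : Set X) (hI : IsIdealSet X I) : Con X where
  r x y := x = y ∨ (x ∈ I ∧ y ∈ I)
  iseqv :=
    { refl := fun _ => Or.inl rfl
      symm := by rintro x y (rfl | ⟨h1, h2⟩); exacts [Or.inl rfl, Or.inr ⟨h2, h1⟩]
      trans := by
        rintro x y z (rfl | ⟨h1, h2⟩) (rfl | ⟨h3, h4⟩)
        exacts [Or.inl rfl, Or.inr ⟨h3, h4⟩, Or.inr ⟨h1, h2⟩, Or.inr ⟨h1, h4⟩] }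
  mul' := by
    rintro a b c d (rfl | ⟨h1, h2⟩) (rfl | ⟨h3, h4⟩)
    · exact Or.inl rfl
    · exact Or.inr ⟨(hI c h3 a).2, (hI d h4 a).2⟩
    · exact Or.inr ⟨(hI a h1 c).1, (hI b h2 c).1⟩
    · exact Or.inr ⟨(hI a h1 c).1, (hI b h2 d).1⟩

/-- `X` is ideally `T₂S`-closed: all its Rees quotients are `T₂S`-closed. -/
def IdeallyT2SClosed (X : Type u) [Semigroup X] : Prop :=
  ∀ (I : Set X) (hI : IsIdealSet X I), T2SClosed (ReesCon I hI).Quotient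

/-- `X` is ideally `TzS`-closed. -/
def IdeallyTzSClosed (X : Type u) [Semigroup X] : Prop :=
  ∀ (I : Set X) (hI : IsIdealSet X I), TzSClosed (ReesCon I hI).Quotient

/-- A congruence is a semilattice congruence if its quotient is a commutative
semigroup of idempotents. -/
def IsSemilatticeCon {X : Type*} [Semigroup X] (c : Con X) : Prop :=
  (∀ a b : c.Quotient, a * b = b * a) ∧ ∀ a : c.Quotient, a * a = a

/-- The smallest semilattice congruence `⇕` on `X`, the intersection of all
semilattice congruences. -/
def slCon (X : Type*) [Semigroup X] : Con X := sInf {c | IsSemilatticeCon c}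

theorem centerSet_mul_mem {X : Type*} [Semigroup X] {a b : X}
    (ha : a ∈ centerSet X) (hb : b ∈ centerSet X) : a * b ∈ centerSet X := fun t => by
  rw [mul_assoc, hb t, ← mul_assoc, ha t, mul_assoc]

/-- The ideal center `IZ(X) = {z ∈ Z(X) : zX ⊆ Z(X)}`, as a subsemigroup of `X`. -/
def idealCenter (X : Type*) [Semigroup X] : Subsemigroup X where
  carrier := {z | z ∈ centerSet X ∧ ∀ x : X, z * x ∈ centerSet X}
  mul_mem' := by
    rintro a b ⟨ha, ha'⟩ ⟨hb, hb'⟩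
    refine ⟨centerSet_mul_mem ha hb, fun x => ?_⟩
    have h : a * b * x = a * (b * x) := mul_assoc a b x
    rw [h]
    exact centerSet_mul_mem ha (hb' x)

/-- Evaluation of the semigroup polynomial with coefficients `a, l = [a₁, …, aₙ]`:
`x ↦ a * x * a₁ * x * ⋯ * x * aₙ` (computed in `X¹ = WithOne X`). -/
def polyEval {X : Type*} [Semigroup X] (a : WithOne X) (l : List (WithOne X)) (x : X) :
    WithOne X :=
  l.foldl (fun acc b => acc * (x : WithOne X) * b) a

/-- `f : X → X¹` is a semigroup polynomial of degree `d ≥ 1`. -/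
def IsSemigroupPolynomial {X : Type*} [Semigroup X] (f : X → WithOne X) (d : ℕ) : Prop :=
  1 ≤ d ∧ ∃ (a : WithOne X) (l : List (WithOne X)), l.length = d ∧ ∀ x, f x = polyEval a l x

/-- `X` is polybounded. -/
def Polybounded (X : Type*) [Semigroup X] : Prop :=
  ∃ (k : ℕ) (f : Fin k → X → WithOne X) (d : Fin k → ℕ) (b : Fin k → X),
    (∀ i, IsSemigroupPolynomial (f i) (d i)) ∧ ∀ x : X, ∃ i, f i x = (b i : WithOne X)

/-- `X` is polyfinite. -/
def Polyfinite (X : Type*) [Semigroup X] : Prop :=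
  ∃ (d : ℕ) (F : Set X), F.Finite ∧ ∀ x y : X,
    ∃ (f : X → WithOne X) (m : ℕ), m ≤ d ∧ IsSemigroupPolynomial f m ∧
      (∃ u ∈ F, f x = (u : WithOne X)) ∧ ∃ v ∈ F, f y = (v : WithOne X)

/-- `X` is `B`-centrobounded over `B ⊆ E(X)`: there is `n ≥ 1` such that for every
`e ∈ B` and all `x, y ∈ ⋂_{a ∈ B} H_a/a`, if `w` is the inverse of `y*e` in the group
`H_e` and `(x*e)*w ∈ H_e ∩ Z(X)`, then `((x*e)*w)ⁿ` is an idempotent. -/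
def Centrobounded {X : Type*} [Semigroup X] (B : Set X) : Prop :=
  ∃ n : ℕ, ∀ e ∈ B, ∀ x ∈ ⋂ a ∈ B, HeCoideal X a, ∀ y ∈ ⋂ a ∈ B, HeCoideal X a,
    ∀ w ∈ maxSubgroup X e, (y * e) * w = e → w * (y * e) = e →
      (x * e) * w ∈ maxSubgroup X e → (x * e) * w ∈ centerSet X →
        spow ((x * e) * w) n ∈ idemSet X

/-- `B` is an antichain in the natural partial order `e ≤ f ⇔ ef = fe = e` on idempotents. -/
def IsIdemAntichain {X : Type*} [Semigroup X] (B : Set X) : Prop :=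
  ∀ e ∈ B, ∀ f ∈ B, e ≠ f → ¬(e * f = e ∧ f * e = e) ∧ ¬(e * f = f ∧ f * e = f)
theorem zeroExt_aux (X : Type u) [Semigroup X] (hX : TzSClosed X)
    (𝒰 : Set (Set (WithZero X)))
    (hP0 : 𝒰.Nonempty)
    (hP2 : ∀ U ∈ 𝒰, ∀ V ∈ 𝒰, U ∩ V ∈ 𝒰)
    (hP3 : ∀ x : X, ∃ U ∈ 𝒰, (x : WithZero X) ∉ U)
    (hP4 : ∀ U ∈ 𝒰, ∀ a : X, ∃ V ∈ 𝒰, ∀ z ∈ V, z * (a : WithZero X) ∈ U)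
    (hP5 : ∀ U ∈ 𝒰, ∀ a : X, ∃ V ∈ 𝒰, ∀ z ∈ V, (a : WithZero X) * z ∈ U)
    (hP6 : ∀ U ∈ 𝒰, ∃ V ∈ 𝒰, ∃ W ∈ 𝒰, ∀ z ∈ V, ∀ w ∈ W, z * w ∈ U)
    (hP7 : ∀ U ∈ 𝒰, (U ∩ Set.range (fun x : X => (x : WithZero X))).Nonempty) :
    False := by
  classical
  set S : Set (WithZero X) := Set.range (fun x : X => (x : WithZero X)) with hSdef
  have memS : ∀ {y : WithZero X}, y ≠ 0 → y ∈ S := by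
    intro y hy
    obtain ⟨a, ha⟩ := WithZero.ne_zero_iff_exists.mp hy
    exact ⟨a, ha⟩
  have mulS : ∀ {y z : WithZero X}, y ∈ S → z ∈ S → y * z ∈ S := by
    rintro y z ⟨a, rfl⟩ ⟨b, rfl⟩
    exact ⟨a * b, (WithZero.coe_mul a b).symm ▸ rfl⟩
  set B : Set (Set (WithZero X)) :=
    {s | ∃ x : X, s = {(x : WithZero X)}} ∪
      {s | ∃ U ∈ 𝒰, s = insert 0 (U ∩ S)} with hBdef
  letI τ' : TopologicalSpace (WithZero X) := generateFrom B
  have open_basic : ∀ s ∈ B, IsOpen s := fun s hs =>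
    TopologicalSpace.isOpen_generateFrom_of_mem hs
  have open_sing : ∀ x : X, IsOpen ({(x : WithZero X)} : Set (WithZero X)) :=
    fun x => open_basic _ (Or.inl ⟨x, rfl⟩)
  have open_sing' : ∀ {y : WithZero X}, y ≠ 0 → IsOpen ({y} : Set (WithZero X)) := by
    intro y hy
    obtain ⟨a, ha⟩ := WithZero.ne_zero_iff_exists.mp hy
    rw [← ha]; exact open_sing a
  have open_BU : ∀ U ∈ 𝒰, IsOpen (insert (0 : WithZero X) (U ∩ S)) :=
    fun U hU => open_basic _ (Or.inr ⟨U, hU, rfl⟩)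
  have basis : IsTopologicalBasis B := by
    refine ⟨?_, ?_, rfl⟩
    · rintro t₁ h₁ t₂ h₂ y ⟨hy₁, hy₂⟩
      rcases h₁ with ⟨x, rfl⟩ | ⟨U, hU, rfl⟩
      · rcases hy₁ with rfl
        exact ⟨{(x : WithZero X)}, Or.inl ⟨x, rfl⟩, rfl,
          Set.singleton_subset_iff.mpr ⟨rfl, hy₂⟩⟩
      · rcases h₂ with ⟨x, rfl⟩ | ⟨V, hV, rfl⟩
        · rcases hy₂ with rfl
          exact ⟨{(x : WithZero X)}, Or.inl ⟨x, rfl⟩, rfl,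
            Set.singleton_subset_iff.mpr ⟨hy₁, rfl⟩⟩
        · by_cases hy0 : y = 0
          · subst hy0
            refine ⟨insert 0 (U ∩ V ∩ S), Or.inr ⟨U ∩ V, hP2 U hU V hV, rfl⟩,
              Set.mem_insert _ _, ?_⟩
            rintro z (rfl | ⟨⟨hzU, hzV⟩, hzS⟩)
            · exact ⟨Set.mem_insert _ _, Set.mem_insert _ _⟩
            · exact ⟨Or.inr ⟨hzU, hzS⟩, Or.inr ⟨hzV, hzS⟩⟩
          · obtain ⟨a, ha⟩ := WithZero.ne_zero_iff_exists.mp hy0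
            exact ⟨{y}, Or.inl ⟨a, by rw [ha]⟩, rfl,
              Set.singleton_subset_iff.mpr ⟨hy₁, hy₂⟩⟩
    · refine Set.eq_univ_of_forall fun y => ?_
      by_cases hy : y = 0
      · obtain ⟨U, hU⟩ := hP0
        exact ⟨insert 0 (U ∩ S), Or.inr ⟨U, hU, rfl⟩, by rw [hy]; exact Set.mem_insert _ _⟩
      · obtain ⟨a, ha⟩ := WithZero.ne_zero_iff_exists.mp hy
        exact ⟨{y}, Or.inl ⟨a, by rw [ha]⟩, rfl⟩
  haveI t1 : T1Space (WithZero X) := by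
    rw [t1Space_iff_exists_open]
    intro a b hab
    by_cases ha : a = 0
    · subst ha
      obtain ⟨x, hx⟩ := WithZero.ne_zero_iff_exists.mp (Ne.symm hab)
      obtain ⟨U, hU, hxU⟩ := hP3 x
      refine ⟨insert 0 (U ∩ S), open_BU U hU, Set.mem_insert _ _, ?_⟩
      rintro (h | ⟨hbU, -⟩)
      · exact hab h.symm
      · exact hxU (hx ▸ hbU)
    · exact ⟨{a}, open_sing' ha, rfl, fun h => hab (Set.mem_singleton_iff.mp h).symm⟩
  haveI cm : ContinuousMul (WithZero X) := by
    refine ⟨?_⟩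
    rw [continuous_generateFrom_iff]
    rintro s hs
    rw [isOpen_iff_forall_mem_open]
    rintro ⟨p₁, p₂⟩ hp
    rcases hs with ⟨c, rfl⟩ | ⟨U, hU, rfl⟩
    · have h1 : p₁ ≠ 0 := by
        rintro rfl
        rw [Set.mem_preimage] at hp
        simp only [zero_mul] at hp
        exact WithZero.coe_ne_zero (Set.mem_singleton_iff.mp hp).symm
      have h2 : p₂ ≠ 0 := by
        rintro rfl
        rw [Set.mem_preimage] at hp
        simp only [mul_zero] at hp
        exact WithZero.coe_ne_zero (Set.mem_singleton_iff.mp hp).symm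
      refine ⟨{p₁} ×ˢ {p₂}, ?_, (open_sing' h1).prod (open_sing' h2), rfl, rfl⟩
      rintro ⟨q₁, q₂⟩ ⟨hq1, hq2⟩
      rcases Set.mem_singleton_iff.mp hq1 with rfl
      rcases Set.mem_singleton_iff.mp hq2 with rfl
      exact hp
    · by_cases h1 : p₁ = 0
      · by_cases h2 : p₂ = 0
        · obtain ⟨V, hV, W, hW, hVW⟩ := hP6 U hU
          refine ⟨insert 0 (V ∩ S) ×ˢ insert 0 (W ∩ S), ?_,
            (open_BU V hV).prod (open_BU W hW),
            by rw [h1]; exact Set.mem_insert _ _, by rw [h2]; exact Set.mem_insert _ _⟩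
          rintro ⟨q₁, q₂⟩ ⟨hq1, hq2⟩
          rcases Set.mem_insert_iff.mp hq1 with rfl | ⟨hq1U, hq1S⟩
          · rw [Set.mem_preimage]; simp only [zero_mul]; exact Set.mem_insert _ _
          rcases Set.mem_insert_iff.mp hq2 with rfl | ⟨hq2U, hq2S⟩
          · rw [Set.mem_preimage]; simp only [mul_zero]; exact Set.mem_insert _ _
          · exact Or.inr ⟨hVW _ hq1U _ hq2U, mulS hq1S hq2S⟩
        · obtain ⟨y, hy⟩ := WithZero.ne_zero_iff_exists.mp h2
          obtain ⟨V, hV, hVy⟩ := hP4 U hU y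
          refine ⟨insert 0 (V ∩ S) ×ˢ {p₂}, ?_,
            (open_BU V hV).prod (open_sing' h2),
            by rw [h1]; exact Set.mem_insert _ _, rfl⟩
          rintro ⟨q₁, q₂⟩ ⟨hq1, hq2⟩
          rcases Set.mem_singleton_iff.mp hq2 with rfl
          rcases Set.mem_insert_iff.mp hq1 with rfl | ⟨hq1V, hq1S⟩
          · rw [Set.mem_preimage]; simp only [zero_mul]; exact Set.mem_insert _ _
          · refine Or.inr ⟨?_, mulS hq1S (memS h2)⟩
            have hz := hVy _ hq1V
            rw [hy] at hz
            exact hz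
      · by_cases h2 : p₂ = 0
        · obtain ⟨x, hx⟩ := WithZero.ne_zero_iff_exists.mp h1
          obtain ⟨V, hV, hVx⟩ := hP5 U hU x
          refine ⟨{p₁} ×ˢ insert 0 (V ∩ S), ?_,
            (open_sing' h1).prod (open_BU V hV),
            rfl, by rw [h2]; exact Set.mem_insert _ _⟩
          rintro ⟨q₁, q₂⟩ ⟨hq1, hq2⟩
          rcases Set.mem_singleton_iff.mp hq1 with rfl
          rcases Set.mem_insert_iff.mp hq2 with rfl | ⟨hq2V, hq2S⟩
          · rw [Set.mem_preimage]; simp only [mul_zero]; exact Set.mem_insert _ _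
          · refine Or.inr ⟨?_, mulS (memS h1) hq2S⟩
            have hz := hVx _ hq2V
            rw [hx] at hz
            exact hz
        · refine ⟨{p₁} ×ˢ {p₂}, ?_, (open_sing' h1).prod (open_sing' h2), rfl, rfl⟩
          rintro ⟨q₁, q₂⟩ ⟨hq1, hq2⟩
          rcases Set.mem_singleton_iff.mp hq1 with rfl
          rcases Set.mem_singleton_iff.mp hq2 with rfl
          exact hp
  have clb : HasClopenBasis (WithZero X) := by
    refine ⟨B, fun s hs => ⟨?_, open_basic s hs⟩, basis⟩
    rw [← isOpen_compl_iff]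
    rw [isOpen_iff_forall_mem_open]
    intro y hy
    rcases hs with ⟨c, rfl⟩ | ⟨U, hU, rfl⟩
    · by_cases hy0 : y = 0
      · subst hy0
        obtain ⟨U, hU, hcU⟩ := hP3 c
        refine ⟨insert 0 (U ∩ S), ?_, open_BU U hU, Set.mem_insert _ _⟩
        rintro z (rfl | ⟨hzU, -⟩)
        · exact fun h => WithZero.coe_ne_zero (Set.mem_singleton_iff.mp h).symm
        · exact fun h => hcU ((Set.mem_singleton_iff.mp h) ▸ hzU)
      · exact ⟨{y}, Set.singleton_subset_iff.mpr hy, open_sing' hy0, rfl⟩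
    · have hy0 : y ≠ 0 := fun h => hy (h ▸ Set.mem_insert _ _)
      exact ⟨{y}, Set.singleton_subset_iff.mpr hy, open_sing' hy0, rfl⟩
  set h : X →ₙ* WithZero X := ⟨fun x => (x : WithZero X), fun a b => WithZero.coe_mul a b⟩
    with hhdef
  have hinj : Function.Injective h := fun a b hab => WithZero.coe_inj.mp hab
  have hrange : Set.range ⇑h = S := rfl
  haveI hdisc : DiscreteTopology ↥(Set.range ⇑h) := by
    rw [discreteTopology_iff_isOpen_singleton]
    rintro ⟨y, hy⟩
    have hy0 : y ≠ 0 := by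
      obtain ⟨x, hx⟩ := hy
      exact fun h0 => WithZero.coe_ne_zero (h0 ▸ hx : (x : WithZero X) = 0)
    have : ({⟨y, hy⟩} : Set ↥(Set.range ⇑h)) = Subtype.val ⁻¹' {y} := by
      ext z; simp [Subtype.ext_iff]
    rw [this]
    exact (open_sing' hy0).preimage continuous_subtype_val
  have hclosed : IsClosed (Set.range ⇑h) := hX (WithZero X) clb h hinj hdisc
  have h0 : (0 : WithZero X) ∈ closure (Set.range ⇑h) := by
    rw [mem_closure_iff]
    intro o ho h0o
    obtain ⟨b, hbB, h0b, hbo⟩ := basis.exists_subset_of_mem_open h0o ho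
    rcases hbB with ⟨x, rfl⟩ | ⟨U, hU, rfl⟩
    · exact absurd (Set.mem_singleton_iff.mp h0b).symm WithZero.coe_ne_zero
    · obtain ⟨z, hzU, hzS⟩ := hP7 U hU
      exact ⟨z, hbo (Set.mem_insert_iff.mpr (Or.inr ⟨hzU, hzS⟩)), hzS⟩
  obtain ⟨x, hx⟩ := hclosed.closure_subset h0
  exact WithZero.coe_ne_zero (hx : (x : WithZero X) = 0)

theorem statement13 (X : Type u) [Semigroup X] (hX : TzSClosed X) :
    ∀ t : TopologicalSpace (WithZero X),
      @ContinuousMul (WithZero X) t _ → @T2Space (WithZero X) t →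
        @IsClosed (WithZero X) t (Set.range (fun x : X => (x : WithZero X))) := by
  intro t ct h2
  letI := t
  haveI := ct
  haveI := h2
  by_contra hcl
  set S : Set (WithZero X) := Set.range (fun x : X => (x : WithZero X)) with hSdef
  have h0 : (0 : WithZero X) ∈ closure S := by
    by_contra h0
    apply hcl
    have hC : closure S = S := by
      refine Set.Subset.antisymm (fun y hy => ?_) subset_closure
      by_cases hy0 : y = 0
      · exact absurd (hy0 ▸ hy) h0
      · obtain ⟨x, hx⟩ := WithZero.ne_zero_iff_exists.mp hy0
        exact ⟨x, hx⟩
    rw [← hC]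
    exact isClosed_closure
  set 𝒰 : Set (Set (WithZero X)) := {U | IsOpen U ∧ (0 : WithZero X) ∈ U} with hUdef
  refine zeroExt_aux X hX 𝒰 ⟨Set.univ, isOpen_univ, Set.mem_univ _⟩
    (fun U hU V hV => ⟨hU.1.inter hV.1, hU.2, hV.2⟩) ?_ ?_ ?_ ?_ ?_
  · intro x
    have hne : (0 : WithZero X) ≠ (x : WithZero X) := Ne.symm WithZero.coe_ne_zero
    obtain ⟨U, hU, h0U, hxU⟩ := t1Space_iff_exists_open.mp inferInstance hne
    exact ⟨U, ⟨hU, h0U⟩, hxU⟩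
  · intro U hU a
    have hpre : IsOpen ((fun p : WithZero X × WithZero X => p.1 * p.2) ⁻¹' U) :=
      hU.1.preimage continuous_mul
    have hmem : ((0 : WithZero X), (a : WithZero X)) ∈
        (fun p : WithZero X × WithZero X => p.1 * p.2) ⁻¹' U := by
      show (0 : WithZero X) * (a : WithZero X) ∈ U
      rw [zero_mul]; exact hU.2
    obtain ⟨V, W, hV, hW, h0V, haW, hsub⟩ := isOpen_prod_iff.mp hpre _ _ hmem
    exact ⟨V, ⟨hV, h0V⟩, fun z hz => hsub (Set.mk_mem_prod hz haW)⟩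
  · intro U hU a
    have hpre : IsOpen ((fun p : WithZero X × WithZero X => p.1 * p.2) ⁻¹' U) :=
      hU.1.preimage continuous_mul
    have hmem : ((a : WithZero X), (0 : WithZero X)) ∈
        (fun p : WithZero X × WithZero X => p.1 * p.2) ⁻¹' U := by
      show (a : WithZero X) * (0 : WithZero X) ∈ U
      rw [mul_zero]; exact hU.2
    obtain ⟨V, W, hV, hW, haV, h0W, hsub⟩ := isOpen_prod_iff.mp hpre _ _ hmem
    exact ⟨W, ⟨hW, h0W⟩, fun z hz => hsub (Set.mk_mem_prod haV hz)⟩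
  · intro U hU
    have hpre : IsOpen ((fun p : WithZero X × WithZero X => p.1 * p.2) ⁻¹' U) :=
      hU.1.preimage continuous_mul
    have hmem : ((0 : WithZero X), (0 : WithZero X)) ∈
        (fun p : WithZero X × WithZero X => p.1 * p.2) ⁻¹' U := by
      show (0 : WithZero X) * (0 : WithZero X) ∈ U
      rw [zero_mul]; exact hU.2
    obtain ⟨V, W, hV, hW, h0V, h0W, hsub⟩ := isOpen_prod_iff.mp hpre _ _ hmem
    exact ⟨V, ⟨hV, h0V⟩, W, ⟨hW, h0W⟩, fun z hz w hw => hsub (Set.mk_mem_prod hz hw)⟩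
  · intro U hU
    exact mem_closure_iff.mp h0 U hU.1 hU.2
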